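/- Let V be a finite-dimensional real vector space, W a real vector space, p : W → V a surjective linear map, T : V → W an injective linear map whose image equals ker p, α : V → W a linear map with p ∘ α = id_V, and B : V → V a bijective linear map. Denote by T⁻¹ : ker p → V the inverse of T onto its image, and note that id_W − α ∘ p maps W into ker p. Define J : W → W by J = −α ∘ B⁻¹ ∘ T⁻¹ ∘ (id_W − α ∘ p) + T ∘ B ∘ p. Then: (i) J ∘ J = −id_W; (ii) J ∘ α = T ∘ B; (iii) the restriction of J to ker p equals −α ∘ B⁻¹ ∘ T⁻¹; (iv) the (−i)-eigenspace of the complexification of J equals the image of A := α_ℂ + i·(T ∘ B)_ℂ : ℂ ⊗_ℝ V → ℂ ⊗_ℝ W. -/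
import Mathlib

open TensorProduct

/-- Pointwise content of formula (FormulJA) for the almost complex structure `J_A`
associated to a pair `(α, B)`: `J∘J = -id`, `J∘α = T∘B`, `J` on `ker p` is
`-α∘B⁻¹∘T⁻¹`, and the `(-i)`-eigenspace of the complexification of `J` is the image
of `A = α_ℂ + i (T∘B)_ℂ`. Here `Tinv` is a linear left inverse of `T` (hence the
inverse of `T` on its image `ker p`) and `Binv` the inverse of `B`. -/
theorem formula_JA_pointwise
    {V W : Type*} [AddCommGroup V] [Module ℝ V] [FiniteDimensional ℝ V]
    [AddCommGroup W] [Module ℝ W]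
    (p : W →ₗ[ℝ] V) (hp : Function.Surjective p)
    (T : V →ₗ[ℝ] W) (hT : Function.Injective T)
    (hTp : LinearMap.range T = LinearMap.ker p)
    (α : V →ₗ[ℝ] W) (hα : p.comp α = LinearMap.id)
    (B Binv : V →ₗ[ℝ] V)
    (hB1 : Binv.comp B = LinearMap.id) (hB2 : B.comp Binv = LinearMap.id)
    (Tinv : W →ₗ[ℝ] V) (hTinv : Tinv.comp T = LinearMap.id)
    (J : W →ₗ[ℝ] W)
    (hJ : J = -(α.comp (Binv.comp (Tinv.comp (LinearMap.id - α.comp p))))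
          + T.comp (B.comp p)) :
    J.comp J = -LinearMap.id ∧
    J.comp α = T.comp B ∧
    (∀ w ∈ LinearMap.ker p, J w = -(α (Binv (Tinv w)))) ∧
    Module.End.eigenspace (LinearMap.baseChange ℂ J) (-Complex.I) =
      LinearMap.range
        (LinearMap.baseChange ℂ α + Complex.I • LinearMap.baseChange ℂ (T.comp B)) := by
  -- pointwise facts
  have hpα : ∀ v, p (α v) = v := fun v => by
    simpa using LinearMap.ext_iff.mp hα v
  have hTiT : ∀ v, Tinv (T v) = v := fun v => by
    simpa using LinearMap.ext_iff.mp hTinv v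
  have hBiB : ∀ v, Binv (B v) = v := fun v => by
    simpa using LinearMap.ext_iff.mp hB1 v
  have hBBi : ∀ v, B (Binv v) = v := fun v => by
    simpa using LinearMap.ext_iff.mp hB2 v
  have hpT : ∀ v, p (T v) = 0 := by
    intro v
    have : T v ∈ LinearMap.ker p := hTp ▸ LinearMap.mem_range_self T v
    exact this
  have hTTi : ∀ w, p w = 0 → T (Tinv w) = w := by
    intro w hw
    obtain ⟨v, hv⟩ : w ∈ LinearMap.range T := hTp ▸ hw
    rw [← hv, hTiT]
  have hJapp : ∀ w, J w = -(α (Binv (Tinv (w - α (p w))))) + T (B (p w)) := by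
    intro w
    rw [hJ]
    simp [LinearMap.sub_apply]
  -- (iii)
  have part3 : ∀ w ∈ LinearMap.ker p, J w = -(α (Binv (Tinv w))) := by
    intro w hw
    rw [LinearMap.mem_ker] at hw
    rw [hJapp, hw]
    simp
  -- (ii)
  have part2 : J.comp α = T.comp B := by
    ext v
    simp only [LinearMap.comp_apply]
    rw [hJapp, hpα]
    simp
  -- J (T v) = -α (Binv v)
  have hJT : ∀ v, J (T v) = -(α (Binv v)) := by
    intro v
    rw [part3 (T v) (by exact hpT v), hTiT]
  -- (i)
  have part1 : J.comp J = -LinearMap.id := by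
    ext w
    simp only [LinearMap.comp_apply, LinearMap.neg_apply, LinearMap.id_apply]
    have key : J w = -(α (Binv (Tinv (w - α (p w))))) + T (B (p w)) := hJapp w
    rw [key]
    have h1 : J (T (B (p w))) = -(α (Binv (B (p w)))) := hJT _
    have h2 : p (w - α (p w)) = 0 := by simp [hpα]
    have h3 : J (α (Binv (Tinv (w - α (p w))))) =
        T (B (Binv (Tinv (w - α (p w))))) := by
      have := LinearMap.ext_iff.mp part2 (Binv (Tinv (w - α (p w))))
      simpa using this
    rw [map_add, map_neg, h3, h1, hBiB, hBBi, hTTi _ h2]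
    abel
  refine ⟨part1, part2, part3, ?_⟩
  -- complexified identities
  have hJTB : J.comp (T.comp B) = -α := by
    ext v
    simp only [LinearMap.comp_apply, LinearMap.neg_apply]
    rw [hJT, hBiB]
  have cQ : T.comp (Tinv.comp (LinearMap.id - α.comp p)) = LinearMap.id - α.comp p := by
    ext w
    simp only [LinearMap.comp_apply, LinearMap.sub_apply, LinearMap.id_apply]
    exact hTTi _ (by simp [hpα])
  have cpJ : p.comp J = -(Binv.comp (Tinv.comp (LinearMap.id - α.comp p))) := by
    rw [hJ]
    ext w
    simp only [LinearMap.comp_apply, LinearMap.add_apply, LinearMap.neg_apply,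
      LinearMap.sub_apply, LinearMap.id_apply, map_add, map_neg, hpα, hpT]
    simp
  set Jc := LinearMap.baseChange ℂ J with hJc
  set pc := LinearMap.baseChange ℂ p
  set Tc := LinearMap.baseChange ℂ T
  set αc := LinearMap.baseChange ℂ α
  set Bc := LinearMap.baseChange ℂ B
  set Binvc := LinearMap.baseChange ℂ Binv
  set Tinvc := LinearMap.baseChange ℂ Tinv
  have bc : ∀ (f : V →ₗ[ℝ] W) (g : W →ₗ[ℝ] V), True := fun _ _ => trivial
  have hpαc : ∀ x, pc (αc x) = x := fun x => by
    have := congrArg (LinearMap.baseChange ℂ) hα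
    rw [LinearMap.baseChange_comp, LinearMap.baseChange_id] at this
    simpa using LinearMap.ext_iff.mp this x
  have hBBic : ∀ x, Bc (Binvc x) = x := fun x => by
    have := congrArg (LinearMap.baseChange ℂ) hB2
    rw [LinearMap.baseChange_comp, LinearMap.baseChange_id] at this
    simpa using LinearMap.ext_iff.mp this x
  have hcQ : ∀ x, Tc (Tinvc (x - αc (pc x))) = x - αc (pc x) := fun x => by
    have := congrArg (LinearMap.baseChange ℂ) cQ
    rw [LinearMap.baseChange_comp, LinearMap.baseChange_comp, LinearMap.baseChange_sub,
      LinearMap.baseChange_id, LinearMap.baseChange_comp] at this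
    simpa using LinearMap.ext_iff.mp this x
  have hcpJ : ∀ x, pc (Jc x) = -(Binvc (Tinvc (x - αc (pc x)))) := fun x => by
    have := congrArg (LinearMap.baseChange ℂ) cpJ
    rw [LinearMap.baseChange_comp, LinearMap.baseChange_neg, LinearMap.baseChange_comp,
      LinearMap.baseChange_comp, LinearMap.baseChange_sub,
      LinearMap.baseChange_id, LinearMap.baseChange_comp] at this
    simpa using LinearMap.ext_iff.mp this x
  have hJαc : ∀ x, Jc (αc x) = LinearMap.baseChange ℂ (T.comp B) x := fun x => by
    have := congrArg (LinearMap.baseChange ℂ) part2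
    rw [LinearMap.baseChange_comp] at this
    simpa using LinearMap.ext_iff.mp this x
  have hJTBc : ∀ x, Jc (LinearMap.baseChange ℂ (T.comp B) x) = -(αc x) := fun x => by
    have := congrArg (LinearMap.baseChange ℂ) hJTB
    rw [LinearMap.baseChange_comp, LinearMap.baseChange_neg] at this
    simpa using LinearMap.ext_iff.mp this x
  have hTBc : ∀ x, LinearMap.baseChange ℂ (T.comp B) x = Tc (Bc x) := fun x => by
    rw [LinearMap.baseChange_comp]; rfl
  ext x
  rw [Module.End.mem_eigenspace_iff]
  constructor
  · intro hx
    refine ⟨pc x, ?_⟩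
    -- from hx : Jc x = -I • x
    have h1 : pc (Jc x) = (-Complex.I) • pc x := by rw [hx, map_smul]
    have h2 : Binvc (Tinvc (x - αc (pc x))) = Complex.I • pc x := by
      have := hcpJ x
      rw [h1] at this
      have := congrArg (fun y => -y) this
      simpa [neg_smul] using this.symm
    have h3 : Tinvc (x - αc (pc x)) = Complex.I • Bc (pc x) := by
      have := congrArg Bc h2
      rwa [hBBic, map_smul] at this
    have h4 : x - αc (pc x) = Complex.I • Tc (Bc (pc x)) := by
      have := congrArg Tc h3
      rwa [hcQ, map_smul] at this
    simp only [LinearMap.add_apply, LinearMap.smul_apply, hTBc]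
    rw [← h4]
    abel
  · rintro ⟨u, rfl⟩
    simp only [LinearMap.add_apply, LinearMap.smul_apply]
    rw [map_add, map_smul, hJαc, hJTBc]
    rw [smul_add, smul_smul]
    simp only [neg_mul, Complex.I_mul_I, neg_neg, one_smul]
    module
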